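/- Let (P,w) be a normalized weighted set of n points in R^d (Σ w_i = 1, Σ w_i p_i = 0, Σ w_i ‖p_i‖² = 1), let ε ∈ (0,1), and let u ∈ R^n satisfy (1) ‖Σ_i u_i p_i‖ ≤ ε, (2) |1 − Σ_i u_i| ≤ ε, and (3) |1 − Σ_i u_i ‖p_i‖²| ≤ ε. Then for every x ∈ R^d, |Σ_i (w_i − u_i)‖p_i − x‖²| ≤ 2ε Σ_i w_i ‖p_i − x‖². -/

import Mathlib

open scoped BigOperators
open RealInnerProductSpace

lemma expand_aux {d n : ℕ} (p : Fin n → EuclideanSpace ℝ (Fin d))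
    (v : Fin n → ℝ) (x : EuclideanSpace ℝ (Fin d)) :
    ∑ i, v i * ‖p i - x‖ ^ 2
      = (∑ i, v i * ‖p i‖ ^ 2) - 2 * (inner ℝ (∑ i, v i • p i) x : ℝ) + (∑ i, v i) * ‖x‖ ^ 2 := by
  rw [sum_inner, Finset.sum_mul, Finset.mul_sum, ← Finset.sum_sub_distrib,
    ← Finset.sum_add_distrib]
  refine Finset.sum_congr rfl fun i _ => ?_
  rw [real_inner_smul_left, norm_sub_sq_real]
  ring

theorem stmt2 {d n : ℕ} (p : Fin n → EuclideanSpace ℝ (Fin d)) (w : Fin n → ℝ)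
    (hw1 : ∑ i, w i = 1) (hw2 : ∑ i, w i • p i = 0) (hw3 : ∑ i, w i * ‖p i‖ ^ 2 = 1)
    (ε : ℝ) (hε : ε ∈ Set.Ioo (0 : ℝ) 1) (u : Fin n → ℝ)
    (hu1 : ‖∑ i, u i • p i‖ ≤ ε)
    (hu2 : |1 - ∑ i, u i| ≤ ε)
    (hu3 : |1 - ∑ i, u i * ‖p i‖ ^ 2| ≤ ε) :
    ∀ x : EuclideanSpace ℝ (Fin d),
      |∑ i, (w i - u i) * ‖p i - x‖ ^ 2| ≤ 2 * ε * ∑ i, w i * ‖p i - x‖ ^ 2 := by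
  intro x
  have hw := expand_aux p w x
  rw [hw1, hw2, hw3] at hw
  simp at hw
  have hu := expand_aux p u x
  have hsplit : ∑ i, (w i - u i) * ‖p i - x‖ ^ 2
      = (∑ i, w i * ‖p i - x‖ ^ 2) - ∑ i, u i * ‖p i - x‖ ^ 2 := by
    rw [← Finset.sum_sub_distrib]; congr 1; ext i; ring
  rw [hsplit, hw, hu]
  have hε0 : 0 < ε := hε.1
  have hBx : |(inner ℝ (∑ i, u i • p i) x : ℝ)| ≤ ε * ‖x‖ :=
    (abs_real_inner_le_norm _ _).trans (by
      have := norm_nonneg x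
      nlinarith)
  have h2 := abs_le.mp hu2
  have h3 := abs_le.mp hu3
  have hBx' := abs_le.mp hBx
  have hx2 : (1 - ∑ i, u i) * ‖x‖ ^ 2 ≤ ε * ‖x‖ ^ 2 ∧
      -(ε * ‖x‖ ^ 2) ≤ (1 - ∑ i, u i) * ‖x‖ ^ 2 := by
    constructor <;> nlinarith [sq_nonneg (‖x‖)]
  rw [abs_le]
  constructor <;> nlinarith [sq_nonneg (‖x‖ - 1), sq_nonneg (‖x‖)]
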